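/- Assume conditions (cdt:1)–(cdt:4) of the existence proposition, and additionally 2·a_4·(a_2 − a_5) < a_3·a_5² and a_{−6} < a_6·c·|Γ|·|1 − m|. Let (u_*, v_*) be the stationary point with u_* > u_0 from the existence proposition. Then at (u_*,v_*): ∂_u f > 0, ∂_v f > 0, ∂_u g_0 < 0, ∂_v g_0 < 0, and moreover ∂_u f + ∂_v g_0 < 0 and ∂_u f·∂_v g_0 − ∂_v f·∂_u g_0 > 0. In particular (u_*, v_*) is a linearly stable stationary point of the ODE system u' = γ f, v' = γ g_0, and the system is of activator–substrate-depletion type there. -/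

import Mathlib

private lemma aux_alpha (a1 a2 a3 a5 : ℝ)
    (h1 : 0 < a1) (h2 : 0 < a2) (h3 : 0 < a3) (h5 : 0 < a5) (cdt1 : a5 < a2)
    (hcd4 : a1 < a3 * (a2 - a5) / (2 * a2)) :
    0 < a3*(a2-a5) - a1*a2 ∧ a1 < a3 := by
  have hcd4' := (lt_div_iff₀ (by positivity : (0:ℝ) < 2*a2)).mp hcd4
  constructor
  · nlinarith [mul_pos h1 h2]
  · nlinarith [mul_pos h3 h5, mul_pos h1 h2]

private lemma aux_P (a1 a2 a3 a5 u0 us : ℝ)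
    (h1 : 0 < a1) (h2 : 0 < a2) (h3 : 0 < a3) (h5 : 0 < a5)
    (cdt1 : a5 < a2) (ha13 : a1 < a3) (hα : 0 < a3*(a2-a5) - a1*a2)
    (hu0 : u0 = a1 * a2 * a5 / (a3 * (a2 - a5) - a1 * a2)
          + a2 * Real.sqrt (a1 * a5) * Real.sqrt ((a3 - a1) * (a2 - a5))
            / (a3 * (a2 - a5) - a1 * a2))
    (hu0s : u0 < us) :
    0 < (a3*(a2-a5) - a1*a2)*us^2 - 2*(a1*a2*a5)*us - a1*a2^2*a5 := by
  set S := Real.sqrt (a1*a5) with hSdef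
  set T := Real.sqrt ((a3-a1)*(a2-a5)) with hTdef
  have hS0 : 0 ≤ S := Real.sqrt_nonneg _
  have hT0 : 0 ≤ T := Real.sqrt_nonneg _
  have hS2 : S^2 = a1*a5 := Real.sq_sqrt (by positivity)
  have hT2 : T^2 = (a3-a1)*(a2-a5) := Real.sq_sqrt (by nlinarith)
  rw [hu0, ← add_div, div_lt_iff₀ hα] at hu0s
  have hXY : a1*a2*a5 + a2*(S*T) < (a3*(a2-a5) - a1*a2)*us := by nlinarith [hu0s]
  have hST2 : (S*T)^2 = (a1*a5)*((a3-a1)*(a2-a5)) := by rw [mul_pow, hS2, hT2]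
  have key : (a3*(a2-a5) - a1*a2) * ((a3*(a2-a5) - a1*a2)*us^2 - 2*(a1*a2*a5)*us - a1*a2^2*a5)
      = ((a3*(a2-a5) - a1*a2)*us - (a1*a2*a5 + a2*(S*T)))
        * ((a3*(a2-a5) - a1*a2)*us + (a1*a2*a5 + a2*(S*T)) - 2*(a1*a2*a5)) := by
    linear_combination (a2^2) * hST2
  have h2' : 0 < (a3*(a2-a5) - a1*a2)*us + (a1*a2*a5 + a2*(S*T)) - 2*(a1*a2*a5) := by
    nlinarith [mul_nonneg (mul_nonneg h2.le hS0) hT0]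
  have hαP := key ▸ mul_pos (sub_pos.mpr hXY) h2'
  exact (mul_pos_iff_of_pos_left hα).mp hαP

private lemma aux_st (a1 a2 a3 a4 a5 us vs : ℝ)
    (h2 : 0 < a2) (h5 : 0 < a5) (hus : 0 < us)
    (hstat1 : (a1 + (a3 - a1) * us / (a2 + us)) * vs - a4 * us / (a5 + us) = 0) :
    (a1*a2 + a3*us) * vs * (a5+us) = a4*us*(a2+us) := by
  have he2 : (0:ℝ) < a2 + us := by linarith
  have he5 : (0:ℝ) < a5 + us := by linarith
  field_simp at hstat1
  linarith [hstat1]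

private lemma aux_Aq (a1 a2 a3 a4 a5 us vs : ℝ)
    (h1 : 0 < a1) (h2 : 0 < a2) (h3 : 0 < a3) (h5 : 0 < a5) (hus : 0 < us)
    (hst : (a1*a2 + a3*us) * vs * (a5+us) = a4*us*(a2+us)) :
    ((a3-a1)*a2*vs/(a2+us)^2 - a4*a5/(a5+us)^2)
      * ((a2+us)^2*(a5+us)^2*(a1*a2+a3*us))
      = a4*(a2+us)*((a3*(a2-a5) - a1*a2)*us^2 - 2*(a1*a2*a5)*us - a1*a2^2*a5) := by
  have he2 : (a2 + us) ≠ 0 := by positivity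
  have he5 : (a5 + us) ≠ 0 := by positivity
  have hvs : vs = a4*us*(a2+us)/((a5+us)*(a1*a2+a3*us)) := by
    rw [eq_div_iff (by positivity)]; linear_combination hst
  rw [hvs]; field_simp; ring

set_option maxHeartbeats 1000000 in
private lemma aux_q2 (a1 a2 a3 a4 a5 us : ℝ)
    (h1 : 0 < a1) (h2 : 0 < a2) (h3 : 0 < a3) (h4 : 0 < a4) (h5 : 0 < a5)
    (cdt1 : a5 < a2) (cdt5 : 2 * a4 * (a2 - a5) < a3 * a5 ^ 2) (hus : 0 < us) :
    2*a4*((a3*(a2-a5) - a1*a2)*us^2 - 2*(a1*a2*a5)*us - a1*a2^2*a5)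
      < ((a1*a2+a3*us)*(a5+us))^2 := by
  have t1 : 2*a4*((a3*(a2-a5) - a1*a2)*us^2 - 2*(a1*a2*a5)*us - a1*a2^2*a5)
      ≤ 2*a4*(a3*(a2-a5))*us^2 := by
    nlinarith [mul_nonneg h4.le (mul_nonneg (mul_nonneg h1.le h2.le) (sq_nonneg us)),
      mul_nonneg h4.le (mul_nonneg (mul_nonneg (mul_nonneg h1.le h2.le) h5.le) hus.le),
      mul_nonneg h4.le (mul_nonneg (mul_nonneg h1.le (mul_nonneg h2.le h2.le)) h5.le)]
  have t2 : 2*a4*(a3*(a2-a5))*us^2 < a3^2*a5^2*us^2 := by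
    nlinarith [mul_pos (sub_pos.mpr cdt5) (mul_pos h3 (mul_pos hus hus))]
  have t3 : a3^2*a5^2*us^2 < ((a1*a2+a3*us)*(a5+us))^2 := by
    have hF : 0 < (a1*a2+a3*us)*(a5+us) - a3*us*a5 := by
      nlinarith [mul_pos (mul_pos h1 h2) h5, mul_pos (mul_pos h1 h2) hus,
        mul_pos h3 (mul_pos hus hus)]
    have hG : 0 < (a1*a2+a3*us)*(a5+us) + a3*us*a5 := by positivity
    nlinarith [mul_pos hF hG]
  linarith

private lemma aux_K (a6 am6 V0 c Γ m us vs : ℝ)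
    (h6 : 0 < a6) (hc : 0 < c) (hΓ : 0 < Γ)
    (hm : m = V0 / (c * Γ))
    (cdt6 : am6 < a6 * c * Γ * |1 - m|)
    (hsum : us + vs < min 1 m) :
    0 < a6*(c*Γ)*(1-(us+vs)) + a6*(V0 - c*Γ*(us+vs)) ∧
    am6 < a6*(c*Γ)*(1-(us+vs)) + a6*(V0 - c*Γ*(us+vs)) := by
  have hcΓ : (0:ℝ) < c * Γ := mul_pos hc hΓ
  have hs1 : us + vs < 1 := lt_of_lt_of_le hsum (min_le_left _ _)
  have hsm : us + vs < m := lt_of_lt_of_le hsum (min_le_right _ _)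
  have hV0m : V0 = m * (c * Γ) := by rw [hm]; field_simp
  have hVs : 0 < V0 - c*Γ*(us+vs) := by
    rw [hV0m]; nlinarith [mul_pos hcΓ (sub_pos.mpr hsm)]
  have h1s : 0 < a6*(c*Γ)*(1-(us+vs)) := mul_pos (mul_pos h6 hcΓ) (sub_pos.mpr hs1)
  constructor
  · nlinarith [mul_pos h6 hVs]
  · rcases le_or_gt m 1 with hm1 | hm1
    · rw [abs_of_nonneg (by linarith : (0:ℝ) ≤ 1 - m)] at cdt6
      nlinarith [mul_pos (mul_pos h6 hcΓ) (sub_pos.mpr hsm), hV0m]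
    · rw [abs_of_neg (by linarith : (1:ℝ) - m < 0)] at cdt6
      nlinarith [mul_pos (mul_pos h6 hcΓ) (sub_pos.mpr hs1), hV0m]

private lemma aux_final (A B K am6 : ℝ)
    (hApos : 0 < A) (hBpos : 0 < B) (hKpos : 0 < K) (hKam : am6 < K)
    (hm6 : 0 < am6) (h2AB : 2*A < B) :
    0 < A ∧ 0 < B ∧ (-A - K < 0) ∧ (-B - K - am6 < 0) ∧ (A + (-B - K - am6) < 0) ∧
      0 < A * (-B - K - am6) - B * (-A - K) := by
  refine ⟨hApos, hBpos, by linarith, by linarith, by linarith, ?_⟩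
  nlinarith [mul_pos hApos (sub_pos.mpr hKam),
    mul_nonneg hKpos.le (by linarith : (0:ℝ) ≤ B - 2*A)]

set_option maxHeartbeats 1000000 in
theorem stmt_9 (a1 a2 a3 a4 a5 a6 am6 γ V0 c Γ m u0 us vs : ℝ)
    (h1 : 0 < a1) (h2 : 0 < a2) (h3 : 0 < a3) (h4 : 0 < a4) (h5 : 0 < a5)
    (h6 : 0 < a6) (hm6 : 0 < am6) (hγ : 0 < γ) (hV0 : 0 < V0) (hc : 0 < c)
    (hΓ : 0 < Γ) (hm : m = V0 / (c * Γ))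
    (cdt1 : a5 < a2)
    (cdt2 : 4 * a2 * a4 < a3 * a5 * min m 1)
    (cdt3 : 4 * a4 * a5 * am6 < V0 * a2 * a3 * a6)
    (cdt4 : a1 < min (a3 * (a2 - a5) / (2 * a2))
      ((2 : ℝ) ^ (-8 : ℤ) * a3 ^ 2 * (a2 - a5) ^ 2 * (min m 1) ^ 2 / (a2 ^ 2 * a5)))
    (cdt5 : 2 * a4 * (a2 - a5) < a3 * a5 ^ 2)
    (cdt6 : am6 < a6 * c * Γ * |1 - m|)
    (hu0 : u0 = a1 * a2 * a5 / (a3 * (a2 - a5) - a1 * a2)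
          + a2 * Real.sqrt (a1 * a5) * Real.sqrt ((a3 - a1) * (a2 - a5))
            / (a3 * (a2 - a5) - a1 * a2))
    (hus : 0 < us) (hvs : 0 < vs) (hsum : us + vs < min 1 m) (hu0s : u0 < us)
    (hstat1 : (a1 + (a3 - a1) * us / (a2 + us)) * vs - a4 * us / (a5 + us) = 0)
    (hstat2 : -((a1 + (a3 - a1) * us / (a2 + us)) * vs - a4 * us / (a5 + us))
        + (a6 * (V0 - c * Γ * (us + vs)) * (1 - (us + vs)) - am6 * vs) = 0) :
    0 < deriv (fun s : ℝ =>
        (a1 + (a3 - a1) * s / (a2 + s)) * vs - a4 * s / (a5 + s)) us ∧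
    0 < deriv (fun t : ℝ =>
        (a1 + (a3 - a1) * us / (a2 + us)) * t - a4 * us / (a5 + us)) vs ∧
    deriv (fun s : ℝ =>
        -((a1 + (a3 - a1) * s / (a2 + s)) * vs - a4 * s / (a5 + s))
          + (a6 * (V0 - c * Γ * (s + vs)) * (1 - (s + vs)) - am6 * vs)) us < 0 ∧
    deriv (fun t : ℝ =>
        -((a1 + (a3 - a1) * us / (a2 + us)) * t - a4 * us / (a5 + us))
          + (a6 * (V0 - c * Γ * (us + t)) * (1 - (us + t)) - am6 * t)) vs < 0 ∧
    deriv (fun s : ℝ =>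
        (a1 + (a3 - a1) * s / (a2 + s)) * vs - a4 * s / (a5 + s)) us
      + deriv (fun t : ℝ =>
        -((a1 + (a3 - a1) * us / (a2 + us)) * t - a4 * us / (a5 + us))
          + (a6 * (V0 - c * Γ * (us + t)) * (1 - (us + t)) - am6 * t)) vs < 0 ∧
    0 < deriv (fun s : ℝ =>
        (a1 + (a3 - a1) * s / (a2 + s)) * vs - a4 * s / (a5 + s)) us
      * deriv (fun t : ℝ =>
        -((a1 + (a3 - a1) * us / (a2 + us)) * t - a4 * us / (a5 + us))
          + (a6 * (V0 - c * Γ * (us + t)) * (1 - (us + t)) - am6 * t)) vs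
      - deriv (fun t : ℝ =>
        (a1 + (a3 - a1) * us / (a2 + us)) * t - a4 * us / (a5 + us)) vs
      * deriv (fun s : ℝ =>
        -((a1 + (a3 - a1) * s / (a2 + s)) * vs - a4 * s / (a5 + s))
          + (a6 * (V0 - c * Γ * (s + vs)) * (1 - (s + vs)) - am6 * vs)) us := by
  have he2 : (0:ℝ) < a2 + us := by linarith
  have he5 : (0:ℝ) < a5 + us := by linarith
  have he2' : (a2 + us) ≠ 0 := ne_of_gt he2
  have he5' : (a5 + us) ≠ 0 := ne_of_gt he5
  obtain ⟨hα, ha13⟩ := aux_alpha a1 a2 a3 a5 h1 h2 h3 h5 cdt1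
    (lt_of_lt_of_le cdt4 (min_le_left _ _))
  -- the four derivative values
  have hid : HasDerivAt (fun s : ℝ => s) 1 us := hasDerivAt_id us
  have hidv : HasDerivAt (fun t : ℝ => t) 1 vs := hasDerivAt_id vs
  have q3 : HasDerivAt (fun s : ℝ => (a3 - a1) * s / (a2 + s))
      (((a3-a1)*1*(a2+us) - (a3-a1)*us*1)/(a2+us)^2) us :=
    (hid.const_mul (a3-a1)).div (hid.const_add a2) he2'
  have r3 : HasDerivAt (fun s : ℝ => a4 * s / (a5 + s))
      ((a4*1*(a5+us) - a4*us*1)/(a5+us)^2) us :=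
    (hid.const_mul a4).div (hid.const_add a5) he5'
  have hd1 := ((q3.const_add a1).mul_const vs).sub r3
  have e1 : deriv (fun s : ℝ =>
      (a1 + (a3 - a1) * s / (a2 + s)) * vs - a4 * s / (a5 + s)) us
      = (a3-a1)*a2*vs/(a2+us)^2 - a4*a5/(a5+us)^2 := by
    erw [hd1.deriv]; field_simp; ring
  have hd2 := (hidv.const_mul (a1 + (a3 - a1) * us / (a2 + us))).sub_const
      (a4 * us / (a5 + us))
  have e2 : deriv (fun t : ℝ =>
      (a1 + (a3 - a1) * us / (a2 + us)) * t - a4 * us / (a5 + us)) vs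
      = a1 + (a3 - a1) * us / (a2 + us) := by rw [hd2.deriv]; ring
  have p1 : HasDerivAt (fun s : ℝ => s + vs) 1 us := hid.add_const vs
  have p4 : HasDerivAt (fun s : ℝ => a6 * (V0 - c * Γ * (s + vs))) (a6 * -(c*Γ*1)) us :=
    ((p1.const_mul (c*Γ)).const_sub V0).const_mul a6
  have p5 : HasDerivAt (fun s : ℝ => 1 - (s + vs)) (-1) us := p1.const_sub 1
  have hd3 := hd1.neg.add ((p4.mul p5).sub_const (am6 * vs))
  have e3 : deriv (fun s : ℝ =>
      -((a1 + (a3 - a1) * s / (a2 + s)) * vs - a4 * s / (a5 + s))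
        + (a6 * (V0 - c * Γ * (s + vs)) * (1 - (s + vs)) - am6 * vs)) us
      = -((a3-a1)*a2*vs/(a2+us)^2 - a4*a5/(a5+us)^2)
        - (a6*(c*Γ)*(1-(us+vs)) + a6*(V0 - c*Γ*(us+vs))) := by
    erw [hd3.deriv]; field_simp; ring
  have p1v : HasDerivAt (fun t : ℝ => us + t) 1 vs := hidv.const_add us
  have p4v : HasDerivAt (fun t : ℝ => a6 * (V0 - c * Γ * (us + t))) (a6 * -(c*Γ*1)) vs :=
    ((p1v.const_mul (c*Γ)).const_sub V0).const_mul a6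
  have p5v : HasDerivAt (fun t : ℝ => 1 - (us + t)) (-1) vs := p1v.const_sub 1
  have hd4 := hd2.neg.add ((p4v.mul p5v).sub (hidv.const_mul am6))
  have e4 : deriv (fun t : ℝ =>
      -((a1 + (a3 - a1) * us / (a2 + us)) * t - a4 * us / (a5 + us))
        + (a6 * (V0 - c * Γ * (us + t)) * (1 - (us + t)) - am6 * t)) vs
      = -(a1 + (a3 - a1) * us / (a2 + us))
        - (a6*(c*Γ)*(1-(us+vs)) + a6*(V0 - c*Γ*(us+vs))) - am6 := by
    erw [hd4.deriv]; ring
  rw [e1, e2, e3, e4]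
  set A := (a3-a1)*a2*vs/(a2+us)^2 - a4*a5/(a5+us)^2 with hAdef
  set B := a1 + (a3 - a1) * us / (a2 + us) with hBdef
  set K := a6*(c*Γ)*(1-(us+vs)) + a6*(V0 - c*Γ*(us+vs)) with hKdef
  have hst := aux_st a1 a2 a3 a4 a5 us vs h2 h5 hus hstat1
  have hAq := aux_Aq a1 a2 a3 a4 a5 us vs h1 h2 h3 h5 hus hst
  have hP := aux_P a1 a2 a3 a5 u0 us h1 h2 h3 h5 cdt1 ha13 hα hu0 hu0s
  have hM : (0:ℝ) < (a2+us)^2*(a5+us)^2*(a1*a2+a3*us) := by positivity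
  have hApos : 0 < A := by
    have hAdiv : A = a4*(a2+us)*((a3*(a2-a5) - a1*a2)*us^2 - 2*(a1*a2*a5)*us - a1*a2^2*a5)
        / ((a2+us)^2*(a5+us)^2*(a1*a2+a3*us)) := by
      rw [eq_div_iff hM.ne']; exact hAq
    rw [hAdiv]
    exact div_pos (mul_pos (mul_pos h4 he2) hP) hM
  have hBpos : 0 < B := by
    have := div_pos (mul_pos (sub_pos.mpr ha13) hus) he2
    rw [hBdef]; linarith
  have hq2 := aux_q2 a1 a2 a3 a4 a5 us h1 h2 h3 h4 h5 cdt1 cdt5 hus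
  have hBq : B * ((a2+us)^2*(a5+us)^2*(a1*a2+a3*us))
      = ((a1*a2+a3*us)*(a5+us))^2 * (a2+us) := by
    rw [hBdef]; field_simp; ring
  have h2AB : 2*A < B := by
    have hlt : 2*A * ((a2+us)^2*(a5+us)^2*(a1*a2+a3*us))
        < B * ((a2+us)^2*(a5+us)^2*(a1*a2+a3*us)) := by
      calc 2*A * ((a2+us)^2*(a5+us)^2*(a1*a2+a3*us))
          = 2*(A * ((a2+us)^2*(a5+us)^2*(a1*a2+a3*us))) := by ring
        _ = 2*(a4*(a2+us)*((a3*(a2-a5) - a1*a2)*us^2 - 2*(a1*a2*a5)*us - a1*a2^2*a5)) := by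
            rw [hAq]
        _ = (a2+us) * (2*a4*((a3*(a2-a5) - a1*a2)*us^2 - 2*(a1*a2*a5)*us - a1*a2^2*a5)) := by
            ring
        _ < (a2+us) * (((a1*a2+a3*us)*(a5+us))^2) := mul_lt_mul_of_pos_left hq2 he2
        _ = ((a1*a2+a3*us)*(a5+us))^2 * (a2+us) := by ring
        _ = B * ((a2+us)^2*(a5+us)^2*(a1*a2+a3*us)) := hBq.symm
    exact lt_of_mul_lt_mul_right hlt hM.le
  obtain ⟨hKpos, hKam⟩ := aux_K a6 am6 V0 c Γ m us vs h6 hc hΓ hm cdt6 hsum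
  exact aux_final A B K am6 hApos hBpos hKpos hKam hm6 h2AB
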